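/- arXiv:0901.3038 — 4 statements merged into one kernel-verified Lean document; each statement's English description precedes it below -/
import Mathlib

section
/- The unit resource achievable region, i.e. the set of all points α•(−2,1,−1) + β•(2,−1,−1) + γ•(0,−1,1) in ℝ³ with α, β, γ ≥ 0, is equal to the set {(C,Q,E) ∈ ℝ³ : C + Q + E ≤ 0, Q + E ≤ 0, C + 2Q ≤ 0}. -/
/-- The teleportation vector. -/
def vTP : ℝ × ℝ × ℝ := (-2, 1, -1)

/-- The super-dense coding vector. -/
def vSD : ℝ × ℝ × ℝ := (2, -1, -1)

/-- The entanglement distribution vector. -/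
def vED : ℝ × ℝ × ℝ := (0, -1, 1)

/-- The unit resource achievable region: all nonnegative combinations of
teleportation, super-dense coding, and entanglement distribution. -/
def unitRegion : Set (ℝ × ℝ × ℝ) :=
  {p | ∃ α β γ : ℝ, 0 ≤ α ∧ 0 ≤ β ∧ 0 ≤ γ ∧ p = α • vTP + β • vSD + γ • vED}

theorem unit_resource_region_eq :
    unitRegion =
      {p : ℝ × ℝ × ℝ |
        p.1 + p.2.1 + p.2.2 ≤ 0 ∧ p.2.1 + p.2.2 ≤ 0 ∧ p.1 + 2 * p.2.1 ≤ 0} := by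
  ext ⟨c, q, e⟩
  simp only [unitRegion, vTP, vSD, vED, Set.mem_setOf_eq, Prod.smul_mk, smul_eq_mul,
    Prod.mk_add_mk, Prod.mk.injEq]
  constructor
  · rintro ⟨α, β, γ, hα, hβ, hγ, hc, hq, he⟩
    refine ⟨by linarith, by linarith, by linarith⟩
  · rintro ⟨h1, h2, h3⟩
    exact ⟨-(c + q + e) / 2, -(q + e) / 2, -(c + 2 * q) / 2,
      by linarith, by linarith, by linarith, by ring, by ring, by ring⟩
end

section
/- If a point (C,Q,E) of the unit resource achievable region satisfies C ≥ 0, Q ≥ 0, and E ≥ 0, then (C,Q,E) = (0,0,0). (In other words, the only point of the unit resource achievable region in the closed all-nonnegative octant is the origin: one cannot generate noiseless resources from nothing.) -/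
/-- The only point of the unit resource achievable region in the closed
all-nonnegative octant is the origin. -/
theorem unit_region_nonneg_octant_trivial (p : ℝ × ℝ × ℝ)
    (hp : p ∈ unitRegion) (hC : 0 ≤ p.1) (hQ : 0 ≤ p.2.1) (hE : 0 ≤ p.2.2) :
    p = (0, 0, 0) := by
  obtain ⟨a,b,c,ha,hb,hc,rfl⟩ := hp
  simp only [vTP, vSD, vED, Prod.smul_mk, Prod.mk_add_mk, smul_eq_mul] at *
  have hb0 : b = 0 := by nlinarith
  have ha0 : a = 0 := by nlinarith
  have hc0 : c = 0 := by nlinarith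
  simp [ha0, hb0, hc0]
end

section
/- If a point (C,Q,E) of the unit resource achievable region satisfies C ≥ 0 and Q ≥ 0, then C = 0, Q = 0, and E ≤ 0. (In other words, the unit protocols can never simultaneously generate positive rates of classical and quantum communication; at best they consume entanglement.) -/
/-- The unit protocols can never simultaneously generate positive rates of
classical and quantum communication; at best they consume entanglement. -/
theorem unit_region_no_cbits_and_qubits (p : ℝ × ℝ × ℝ)
    (hp : p ∈ unitRegion) (hC : 0 ≤ p.1) (hQ : 0 ≤ p.2.1) :
    p.1 = 0 ∧ p.2.1 = 0 ∧ p.2.2 ≤ 0 := by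
  obtain ⟨α, β, γ, hα, hβ, hγ, hpe⟩ := hp
  simp only [vTP, vSD, vED, Prod.smul_mk, smul_eq_mul, Prod.mk_add_mk] at hpe
  subst hpe
  simp only at hC hQ ⊢
  refine ⟨by linarith, by linarith, by linarith⟩
end

section
/- Every point (C,Q,E) ∈ ℝ³ with C ≤ 0, Q ≤ 0, and E ≤ 0 lies in the unit resource achievable region; that is, the entire closed all-nonpositive octant can be written in the form α•(−2,1,−1) + β•(2,−1,−1) + γ•(0,−1,1) with α, β, γ ≥ 0. -/
/-- The entire closed all-nonpositive octant lies in the unit resource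
achievable region. -/
theorem nonpos_octant_subset_unit_region (p : ℝ × ℝ × ℝ)
    (hC : p.1 ≤ 0) (hQ : p.2.1 ≤ 0) (hE : p.2.2 ≤ 0) :
    p ∈ unitRegion := by
  refine ⟨-(p.2.1+p.2.2)/2 - p.1/2, -(p.2.1+p.2.2)/2, -p.1/2 - p.2.1, by linarith, by linarith, by linarith, ?_⟩
  simp only [vTP, vSD, vED, Prod.ext_iff, Prod.smul_mk, smul_eq_mul, Prod.mk_add_mk]
  constructor
  · ring
  constructor <;> ring
end
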